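/- Let (Ω, 𝒜, μ) be a probability space, (ℱ_t)_{t∈ℝ} a filtration of sub-σ-algebras of 𝒜, 0 < δ < T real numbers, and m a positive integer. Let a, w : ℝ × Ω → ℝᵐ be jointly measurable processes such that a is adapted (a(t,·) is strongly ℱ_t-measurable for every t), a(t,·) = 0 μ-a.s. for every t ∈ [−δ, 0), w(t,·) = 0 μ-a.s. for every t ∈ (T, T+δ], and ∫_{−δ}^{T} E[|a(t)|²] dt < ∞, ∫₀^{T+δ} E[|w(t)|²] dt < ∞. Then ∫₀^T E[⟨a(t−δ), w(t)⟩] dt = ∫₀^T E[⟨a(t), E[w(t+δ) | ℱ_t]⟩] dt. -/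

import Mathlib

open MeasureTheory
open scoped RealInnerProductSpace ENNReal

section Aux

/-- Conditional expectation commutes with coordinate projections on Euclidean space. -/
lemma condexp_euclidean_proj {Ω : Type*} {n : ℕ} {m m0 : MeasurableSpace Ω}
    {μ : Measure Ω} (hm : m ≤ m0)
    [SigmaFinite (μ.trim hm)] {g : Ω → EuclideanSpace ℝ (Fin n)} (hg : Integrable g μ)
    (i : Fin n) :
    (fun ω => (μ[g|m]) ω i) =ᵐ[μ] μ[fun ω => g ω i|m] := by
  refine ae_eq_condExp_of_forall_setIntegral_eq hm
    ((EuclideanSpace.proj (𝕜 := ℝ) i).integrable_comp hg) (fun s _ _ => ?_)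
    (fun s hs hμs => ?_) ?_
  · exact ((EuclideanSpace.proj (𝕜 := ℝ) i).integrable_comp integrable_condExp).integrableOn
  · calc ∫ x in s, (μ[g|m]) x i ∂μ
        = ∫ x in s, (EuclideanSpace.proj (𝕜 := ℝ) i) ((μ[g|m]) x) ∂μ := rfl
      _ = (EuclideanSpace.proj (𝕜 := ℝ) i) (∫ x in s, (μ[g|m]) x ∂μ) :=
          (EuclideanSpace.proj (𝕜 := ℝ) i).integral_comp_comm
            integrable_condExp.integrableOn
      _ = (EuclideanSpace.proj (𝕜 := ℝ) i) (∫ x in s, g x ∂μ) := by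
          rw [setIntegral_condExp hm hg hs]
      _ = ∫ x in s, (EuclideanSpace.proj (𝕜 := ℝ) i) (g x) ∂μ :=
          ((EuclideanSpace.proj (𝕜 := ℝ) i).integral_comp_comm hg.integrableOn).symm
      _ = ∫ x in s, g x i ∂μ := rfl
  · exact StronglyMeasurable.aestronglyMeasurable
      ((EuclideanSpace.proj (𝕜 := ℝ) i).continuous.comp_stronglyMeasurable
        stronglyMeasurable_condExp)

/-- Self-adjointness-type identity for the conditional expectation against an
`m`-measurable square-integrable function. -/
lemma integral_inner_condexp {Ω : Type*} {n : ℕ} {m m0 : MeasurableSpace Ω}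
    {μ : Measure Ω} (hm : m ≤ m0) [IsFiniteMeasure μ] {f g : Ω → EuclideanSpace ℝ (Fin n)}
    (hfm : StronglyMeasurable[m] f) (hf : MemLp f 2 μ) (hg : MemLp g 2 μ) :
    ∫ ω, ⟪f ω, (μ[g|m]) ω⟫ ∂μ = ∫ ω, ⟪f ω, g ω⟫ ∂μ := by
  haveI : SigmaFinite (μ.trim hm) := by infer_instance
  have hgi : Integrable g μ := hg.integrable one_le_two
  have hfi2 : ∀ i : Fin n, MemLp (fun ω => f ω i) 2 μ := fun i =>
    (EuclideanSpace.proj (𝕜 := ℝ) i).comp_memLp' hf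
  have hgi2 : ∀ i : Fin n, MemLp (fun ω => g ω i) 2 μ := fun i =>
    (EuclideanSpace.proj (𝕜 := ℝ) i).comp_memLp' hg
  have hmul : ∀ i : Fin n, Integrable (fun ω => f ω i * g ω i) μ := by
    intro i
    have h := (hgi2 i).smul (hfi2 i)
      (p := (2 : ℝ≥0∞)) (q := (2 : ℝ≥0∞)) (r := (1 : ℝ≥0∞))
    rw [memLp_one_iff_integrable] at h
    simpa [smul_eq_mul, mul_comm, Pi.mul_def] using h
  have hfm_i : ∀ i : Fin n, StronglyMeasurable[m] (fun ω => f ω i) := fun i =>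
    (EuclideanSpace.proj (𝕜 := ℝ) i).continuous.comp_stronglyMeasurable hfm
  have hcoord : ∀ i : Fin n,
      (fun ω => (μ[g|m]) ω i) =ᵐ[μ] μ[fun ω => g ω i|m] :=
    fun i => condexp_euclidean_proj hm hgi i
  have hpull : ∀ i : Fin n,
      μ[(fun ω => f ω i) * fun ω => g ω i|m]
        =ᵐ[μ] (fun ω => f ω i) * μ[fun ω => g ω i|m] := fun i =>
    condExp_mul_of_stronglyMeasurable_left (hfm_i i) (hmul i) ((hgi2 i).integrable one_le_two)
  have hterm : ∀ i : Fin n,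
      (fun ω => f ω i * (μ[g|m]) ω i)
        =ᵐ[μ] μ[(fun ω => f ω i) * fun ω => g ω i|m] := by
    intro i
    filter_upwards [hcoord i, hpull i] with ω h1 h2
    simp only [Pi.mul_apply] at h2 ⊢
    rw [h1, h2]
  have hint_term : ∀ i : Fin n, Integrable (fun ω => f ω i * (μ[g|m]) ω i) μ := fun i =>
    integrable_condExp.congr (hterm i).symm
  have key : ∀ i : Fin n,
      ∫ ω, f ω i * (μ[g|m]) ω i ∂μ = ∫ ω, f ω i * g ω i ∂μ := by
    intro i
    rw [integral_congr_ae (hterm i), integral_condExp hm]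
    rfl
  calc ∫ ω, ⟪f ω, (μ[g|m]) ω⟫ ∂μ
      = ∫ ω, ∑ i : Fin n, f ω i * (μ[g|m]) ω i ∂μ := by
        refine integral_congr_ae (Filter.Eventually.of_forall fun ω => ?_)
        simp [PiLp.inner_apply, RCLike.inner_apply, conj_trivial, mul_comm]
    _ = ∑ i : Fin n, ∫ ω, f ω i * (μ[g|m]) ω i ∂μ :=
        integral_finset_sum _ (fun i _ => hint_term i)
    _ = ∑ i : Fin n, ∫ ω, f ω i * g ω i ∂μ := by
        exact Finset.sum_congr rfl fun i _ => key i
    _ = ∫ ω, ∑ i : Fin n, f ω i * g ω i ∂μ :=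
        (integral_finset_sum _ (fun i _ => hmul i)).symm
    _ = ∫ ω, ⟪f ω, g ω⟫ ∂μ := by
        refine integral_congr_ae (Filter.Eventually.of_forall fun ω => ?_)
        simp [PiLp.inner_apply, RCLike.inner_apply, conj_trivial, mul_comm]

/-- `MemLp` at exponent 2 from finiteness of the lintegral of the squared norm. -/
lemma memLp_two_of_lintegral_sq {Ω : Type*} {m0 : MeasurableSpace Ω} {μ : Measure Ω}
    {E : Type*} [NormedAddCommGroup E] {f : Ω → E}
    (hf : AEStronglyMeasurable f μ)
    (h : ∫⁻ ω, (‖f ω‖₊ : ℝ≥0∞) ^ 2 ∂μ < ⊤) : MemLp f 2 μ := by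
  rw [memLp_two_iff_integrable_sq_norm hf]
  refine ⟨(hf.norm.mul hf.norm).congr ?_, ?_⟩
  · exact Filter.Eventually.of_forall fun ω => (sq (‖f ω‖)).symm
  · show (∫⁻ ω, (‖(‖f ω‖ ^ 2 : ℝ)‖₊ : ℝ≥0∞) ∂μ) < ⊤
    refine lt_of_eq_of_lt ?_ h
    refine lintegral_congr fun ω => ?_
    rw [nnnorm_pow, nnnorm_norm, ENNReal.coe_pow]

end Aux

/-- Cancellation of the anticipated-state terms in the duality computation:
for an adapted process `a` vanishing on `[-δ, 0)` and a process `w` vanishing on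
`(T, T+δ]`, the delayed pairing equals the pairing against the conditional
expectation of the shifted process. -/
theorem anticipated_duality_cancellation {Ω : Type*} [m0 : MeasurableSpace Ω]
    (μ : Measure Ω) [IsProbabilityMeasure μ]
    (ℱ : ℝ → MeasurableSpace Ω) (hmono : Monotone ℱ) (hle : ∀ t, ℱ t ≤ m0)
    (δ T : ℝ) (hδ : 0 < δ) (hδT : δ < T) (m : ℕ) (hm : 0 < m)
    (a w : ℝ × Ω → EuclideanSpace ℝ (Fin m))
    (ha : Measurable a) (hw : Measurable w)
    (hadapted : ∀ t : ℝ, StronglyMeasurable[ℱ t] fun ω => a (t, ω))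
    (ha0 : ∀ t ∈ Set.Ico (-δ) (0:ℝ), ∀ᵐ ω ∂μ, a (t, ω) = 0)
    (hw0 : ∀ t ∈ Set.Ioc T (T + δ), ∀ᵐ ω ∂μ, w (t, ω) = 0)
    (hai : ∫⁻ t in Set.Icc (-δ) T, ∫⁻ ω, (‖a (t, ω)‖₊ : ℝ≥0∞) ^ 2 ∂μ < ⊤)
    (hwi : ∫⁻ t in Set.Icc (0:ℝ) (T + δ), ∫⁻ ω, (‖w (t, ω)‖₊ : ℝ≥0∞) ^ 2 ∂μ < ⊤) :
    ∫ t in Set.Icc (0:ℝ) T, ∫ ω, ⟪a (t - δ, ω), w (t, ω)⟫ ∂μ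
      = ∫ t in Set.Icc (0:ℝ) T,
          ∫ ω, ⟪a (t, ω), (μ[fun ω => w (t + δ, ω) | ℱ t]) ω⟫ ∂μ := by
  classical
  set F : ℝ → ℝ := fun t => ∫ ω, ⟪a (t, ω), w (t + δ, ω)⟫ ∂μ with hF
  -- measurable versions of the square lintegrals
  have hga : Measurable fun t => ∫⁻ ω, (‖a (t, ω)‖₊ : ℝ≥0∞) ^ 2 ∂μ :=
    Measurable.lintegral_prod_right' ((ha.nnnorm.coe_nnreal_ennreal).pow_const 2)
  have hgw : Measurable fun t => ∫⁻ ω, (‖w (t, ω)‖₊ : ℝ≥0∞) ^ 2 ∂μ :=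
    Measurable.lintegral_prod_right' ((hw.nnnorm.coe_nnreal_ennreal).pow_const 2)
  -- a.e. square integrability of the slices
  have haA : ∀ᵐ t ∂(MeasureTheory.volume : Measure ℝ), t ∈ Set.Icc (-δ) T →
      ∫⁻ ω, (‖a (t, ω)‖₊ : ℝ≥0∞) ^ 2 ∂μ < ⊤ := by
    have := ae_lt_top hga hai.ne
    exact (ae_restrict_iff' measurableSet_Icc).mp this
  have haW0 : ∀ᵐ s ∂(MeasureTheory.volume : Measure ℝ), s ∈ Set.Icc (0:ℝ) (T + δ) →
      ∫⁻ ω, (‖w (s, ω)‖₊ : ℝ≥0∞) ^ 2 ∂μ < ⊤ := by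
    have := ae_lt_top hgw hwi.ne
    exact (ae_restrict_iff' measurableSet_Icc).mp this
  have haW : ∀ᵐ t ∂(MeasureTheory.volume : Measure ℝ), t + δ ∈ Set.Icc (0:ℝ) (T + δ) →
      ∫⁻ ω, (‖w (t + δ, ω)‖₊ : ℝ≥0∞) ^ 2 ∂μ < ⊤ :=
    (measurePreserving_add_right (MeasureTheory.volume : Measure ℝ)
      δ).quasiMeasurePreserving.ae haW0
  -- a.e. strong measurability of slices
  have hasm : ∀ t : ℝ, AEStronglyMeasurable (fun ω => a (t, ω)) μ :=
    fun t => (ha.comp (measurable_const.prodMk measurable_id)).stronglyMeasurable.aestronglyMeasurable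
  have hwsm : ∀ t : ℝ, AEStronglyMeasurable (fun ω => w (t, ω)) μ :=
    fun t => (hw.comp (measurable_const.prodMk measurable_id)).stronglyMeasurable.aestronglyMeasurable
  -- Step 1: rewrite LHS as a translated integral of F
  have step1 : ∫ t in Set.Icc (0:ℝ) T, ∫ ω, ⟪a (t - δ, ω), w (t, ω)⟫ ∂μ
      = ∫ t in Set.Icc (-δ) (T - δ), F t := by
    have h1 : ∀ t : ℝ, (∫ ω, ⟪a (t - δ, ω), w (t, ω)⟫ ∂μ) = F (t - δ) := by
      intro t; simp only [hF, sub_add_cancel]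
    simp_rw [h1]
    rw [← integral_indicator measurableSet_Icc, ← integral_indicator measurableSet_Icc]
    have h2 : ∀ x : ℝ, (Set.Icc (0:ℝ) T).indicator (fun t => F (t - δ)) x
        = (Set.Icc (-δ) (T - δ)).indicator F (x - δ) := by
      intro x
      by_cases hx : x ∈ Set.Icc (0:ℝ) T
      · rw [Set.indicator_of_mem hx, Set.indicator_of_mem]
        simp only [Set.mem_Icc] at hx ⊢
        constructor <;> linarith [hx.1, hx.2]
      · rw [Set.indicator_of_notMem hx, Set.indicator_of_notMem]
        intro hc
        apply hx
        simp only [Set.mem_Icc] at hc ⊢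
        constructor <;> linarith [hc.1, hc.2]
    simp_rw [h2]
    exact integral_sub_right_eq_self ((Set.Icc (-δ) (T - δ)).indicator F) δ
  -- F vanishes where a or (shifted) w vanish
  have hFzero_left : ∀ x ∈ Set.Ico (-δ) (0:ℝ), F x = 0 := by
    intro x hx
    have h0 := ha0 x hx
    rw [hF]
    refine integral_eq_zero_of_ae ?_
    filter_upwards [h0] with ω hω
    simp [hω]
  have hFzero_right : ∀ x, T - δ < x → x ≤ T → F x = 0 := by
    intro x hx1 hx2
    have h0 := hw0 (x + δ) ⟨by linarith, by linarith⟩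
    rw [hF]
    refine integral_eq_zero_of_ae ?_
    filter_upwards [h0] with ω hω
    simp [hω]
  -- Step 2: shift the integration interval using the vanishing of F
  have step2 : ∫ t in Set.Icc (-δ) (T - δ), F t = ∫ t in Set.Icc (0:ℝ) (T - δ), F t := by
    refine setIntegral_eq_of_subset_of_forall_diff_eq_zero measurableSet_Icc
      (Set.Icc_subset_Icc (by linarith) le_rfl) ?_
    intro x hx
    rcases hx with ⟨hx1, hx2⟩
    rw [Set.mem_Icc] at hx1
    have hxlt : x < 0 := by
      by_contra hxge
      exact hx2 ⟨le_of_not_gt hxge, hx1.2⟩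
    exact hFzero_left x ⟨hx1.1, hxlt⟩
  have step3 : ∫ t in Set.Icc (0:ℝ) T, F t = ∫ t in Set.Icc (0:ℝ) (T - δ), F t := by
    refine setIntegral_eq_of_subset_of_forall_diff_eq_zero measurableSet_Icc
      (Set.Icc_subset_Icc le_rfl (by linarith)) ?_
    intro x hx
    rcases hx with ⟨hx1, hx2⟩
    rw [Set.mem_Icc] at hx1
    have hxgt : T - δ < x := by
      by_contra hxle
      exact hx2 ⟨hx1.1, le_of_not_gt hxle⟩
    exact hFzero_right x hxgt hx1.2
  -- Step 4: identify the RHS with the integral of F over [0, T]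
  have step4 : ∫ t in Set.Icc (0:ℝ) T,
      ∫ ω, ⟪a (t, ω), (μ[fun ω => w (t + δ, ω) | ℱ t]) ω⟫ ∂μ
      = ∫ t in Set.Icc (0:ℝ) T, F t := by
    refine setIntegral_congr_ae measurableSet_Icc ?_
    filter_upwards [haA, haW] with t hA hW ht
    rw [Set.mem_Icc] at ht
    have h2a : MemLp (fun ω => a (t, ω)) 2 μ :=
      memLp_two_of_lintegral_sq (hasm t) (hA ⟨by linarith [ht.1], ht.2⟩)
    have h2w : MemLp (fun ω => w (t + δ, ω)) 2 μ :=
      memLp_two_of_lintegral_sq (hwsm (t + δ))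
        (hW ⟨by linarith [ht.1], by linarith [ht.2]⟩)
    exact integral_inner_condexp (hle t) (hadapted t) h2a h2w
  rw [step1, step2, step4, step3]
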